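/- Nonnegativity of the relative entropy correction H_η: let V : ℝ → ℝ be continuous and nonincreasing, and let η : ℝ → ℝ be twice continuously differentiable with η'' ≥ 0 (convex). For a, b ∈ ℝ define H_η(a | b) = ∫_a^b η''(s) V(s) ds − V(b) (η'(b) − η'(a)) (interval integral, with the usual sign convention when b < a). Then H_η(a | b) ≥ 0 for all a, b ∈ ℝ. -/

import Mathlib

/-- Nonnegativity of the relative entropy correction `H_η`: for a continuous
nonincreasing `V` and a `C²` convex entropy `η`,
`H_η(a | b) = ∫_a^b η''(s) V(s) ds − V(b)(η'(b) − η'(a)) ≥ 0`. -/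
theorem relative_entropy_correction_nonneg
    (V η : ℝ → ℝ) (hVcont : Continuous V) (hVmono : Antitone V)
    (hη : ContDiff ℝ 2 η) (hconvex : ∀ s : ℝ, 0 ≤ deriv (deriv η) s) :
    ∀ a b : ℝ,
      0 ≤ (∫ s in a..b, deriv (deriv η) s * V s) - V b * (deriv η b - deriv η a) := by
  intro a b
  have hη' : ContDiff ℝ (1+1) η := by norm_num; exact hη
  have hη1 : ContDiff ℝ 1 (deriv η) := (contDiff_succ_iff_deriv.mp hη').2.2
  have hη0 : ContDiff ℝ (0+1) (deriv η) := by norm_num; exact hη1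
  have hη2cont : Continuous (deriv (deriv η)) := (contDiff_succ_iff_deriv.mp hη0).2.2.continuous
  have hη1diff : Differentiable ℝ (deriv η) := hη1.differentiable one_ne_zero
  have hFTC : (∫ s in a..b, deriv (deriv η) s) = deriv η b - deriv η a :=
    intervalIntegral.integral_deriv_eq_sub (fun x _ => hη1diff x)
      (hη2cont.intervalIntegrable a b)
  have hconst : V b * (deriv η b - deriv η a) = ∫ s in a..b, deriv (deriv η) s * V b := by
    rw [intervalIntegral.integral_mul_const, hFTC, mul_comm]
  rw [hconst, ← intervalIntegral.integral_sub (f := fun s => deriv (deriv η) s * V s)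
      (g := fun s => deriv (deriv η) s * V b)
      ((hη2cont.mul hVcont).intervalIntegrable a b)
      ((hη2cont.mul continuous_const).intervalIntegrable a b)]
  rcases le_total a b with hab | hab
  · apply intervalIntegral.integral_nonneg hab
    intro s hs
    have : V b ≤ V s := hVmono hs.2
    nlinarith [hconvex s]
  · rw [intervalIntegral.integral_symm b a]
    have h0 : (0:ℝ) ≤ ∫ s in b..a, -(deriv (deriv η) s * V s - deriv (deriv η) s * V b) := by
      apply intervalIntegral.integral_nonneg hab
      intro s hs
      have : V s ≤ V b := hVmono hs.1
      nlinarith [hconvex s]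
    rw [intervalIntegral.integral_neg] at h0
    linarith
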